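/- For all x > 1/√2 and y > 0, the partial derivative in x of h(x,y) = (1/(x+y+1))·[x + x(x+1)/(2(x+y))] − ψ(x+y+1) + ψ(y+1) is bounded above by ((1−2x²)y − 2x³ − x²)/(2(x+y)²(x+y+1)²), which is negative. -/

import Mathlib

open Real Set Filter Topology

lemma contDiffOn_Gamma : ContDiffOn ℝ ⊤ Real.Gamma (Ioi 0) := by
  have hopen : IsOpen {s : ℂ | 0 < s.re} := isOpen_lt continuous_const Complex.continuous_re
  have hdiff : DifferentiableOn ℂ Complex.Gamma {s : ℂ | 0 < s.re} := fun s hs =>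
    (Complex.differentiableAt_Gamma s (fun m => by
      intro hc
      simp only [mem_setOf_eq, hc] at hs
      simp only [Complex.neg_re, Complex.natCast_re] at hs
      have : (0:ℝ) ≤ (m:ℝ) := m.cast_nonneg
      linarith)).differentiableWithinAt
  intro x hx
  have hxmem : (x : ℂ) ∈ {s : ℂ | 0 < s.re} := by simpa using hx
  have hA : AnalyticAt ℂ Complex.Gamma x := hdiff.analyticAt (hopen.mem_nhds hxmem)
  have hC : ContDiffAt ℝ ⊤ (fun t : ℝ => (Complex.Gamma t).re) x := by
    have h1 : ContDiffAt ℂ ⊤ Complex.Gamma (x : ℂ) := hA.contDiffAt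
    have h2 : ContDiffAt ℝ ⊤ Complex.Gamma (x : ℂ) := h1.restrict_scalars ℝ
    exact (Complex.reCLM.contDiff.contDiffAt.comp _ (h2.comp x Complex.ofRealCLM.contDiff.contDiffAt))
  have : ContDiffAt ℝ ⊤ Real.Gamma x := by
    refine hC.congr_of_eventuallyEq ?_
    filter_upwards with t
    rw [Complex.Gamma_ofReal, Complex.ofReal_re]
  exact this.contDiffWithinAt

lemma contDiffOn_lg : ContDiffOn ℝ ⊤ (fun t => Real.log (Real.Gamma t)) (Ioi 0) := by
  intro x hx
  exact (((contDiffOn_Gamma x hx).contDiffAt ((isOpen_Ioi).mem_nhds hx)).log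
    (Real.Gamma_pos_of_pos hx).ne').contDiffWithinAt

lemma contDiffOn_psi' : ContDiffOn ℝ ⊤ (deriv (fun t => Real.log (Real.Gamma t))) (Ioi 0) :=
  contDiffOn_lg.deriv_of_isOpen isOpen_Ioi le_top

noncomputable abbrev lg : ℝ → ℝ := fun t => Real.log (Real.Gamma t)
noncomputable abbrev psi0 : ℝ → ℝ := deriv lg

lemma diff_lg {x : ℝ} (hx : 0 < x) : DifferentiableAt ℝ lg x :=
  ((Real.differentiableAt_Gamma (fun m => by intro hc; have := m.cast_nonneg (α := ℝ); linarith [hc ▸ hx])).log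
    (Real.Gamma_pos_of_pos hx).ne')

lemma diff_psi0 {x : ℝ} (hx : 0 < x) : DifferentiableAt ℝ psi0 x :=
  ((contDiffOn_psi'.differentiableOn (by simp)).differentiableAt (isOpen_Ioi.mem_nhds hx))

lemma psi0_rec (x : ℝ) (hx : 0 < x) : psi0 (x + 1) = psi0 x + 1 / x := by
  have h_rec : ∀ t : ℝ, 0 < t → lg (t + 1) = lg t + Real.log t := by
    intro t ht
    simp only [lg, Real.Gamma_add_one ht.ne', Real.log_mul ht.ne' (Real.Gamma_pos_of_pos ht).ne',
      add_comm]
  rw [psi0, ← deriv_comp_add_const, one_div, ← Real.deriv_log,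
    ← deriv_add (diff_lg hx) (Real.differentiableAt_log hx.ne')]
  apply Filter.EventuallyEq.deriv_eq
  filter_upwards [eventually_gt_nhds hx] using h_rec

lemma psi0_mono {a b : ℝ} (ha : 0 < a) (hab : a ≤ b) : psi0 a ≤ psi0 b := by
  rcases eq_or_lt_of_le hab with rfl | hlt
  · exact le_rfl
  have hc : ConvexOn ℝ (Ioi 0) (Real.log ∘ Real.Gamma) := Real.convexOn_log_Gamma
  have h1 := hc.deriv_le_slope (mem_Ioi.mpr ha) (mem_Ioi.mpr (ha.trans hlt)) hlt (diff_lg ha)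
  have h2 := hc.slope_le_deriv (mem_Ioi.mpr ha) (mem_Ioi.mpr (ha.trans hlt)) hlt (diff_lg (ha.trans hlt))
  exact h1.trans h2

lemma deriv_psi0_nonneg {z : ℝ} (hz : 0 < z) : 0 ≤ deriv psi0 z := by
  have hd := (diff_psi0 hz).hasDerivAt
  have ht : Filter.Tendsto (slope psi0 z) (𝓝[>] z) (𝓝 (deriv psi0 z)) :=
    (hasDerivAt_iff_tendsto_slope.mp hd).mono_left
      (nhdsWithin_mono z (fun t ht => ne_of_gt ht))
  refine ge_of_tendsto ht ?_
  filter_upwards [self_mem_nhdsWithin] with t ht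
  have htz : z < t := ht
  rw [slope_def_field]
  apply div_nonneg _ (by linarith)
  have := psi0_mono hz htz.le
  linarith

lemma deriv_psi0_rec {z : ℝ} (hz : 0 < z) :
    deriv psi0 (z + 1) = deriv psi0 z - 1 / z ^ 2 := by
  have h1 : deriv (fun t => psi0 (t + 1)) z = deriv psi0 (z + 1) := deriv_comp_add_const _ _ _
  have h2 : deriv (fun t => psi0 t + t⁻¹) z = deriv psi0 z - 1 / z ^ 2 := by
    rw [deriv_fun_add (diff_psi0 hz) (differentiableAt_inv hz.ne'), deriv_inv]
    field_simp
    ring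
  rw [← h1, ← h2]
  apply Filter.EventuallyEq.deriv_eq
  filter_upwards [eventually_gt_nhds hz] with t ht
  rw [psi0_rec t ht, one_div]

lemma deriv_psi0_ge_partial (N : ℕ) : ∀ z : ℝ, 0 < z →
    (1 / z + 1 / (2 * z ^ 2)) - (1 / (z + N) + 1 / (2 * (z + N) ^ 2)) ≤ deriv psi0 z := by
  induction N with
  | zero => intro z hz; simpa using deriv_psi0_nonneg hz
  | succ n ih =>
    intro z hz
    have hz1 : (0:ℝ) < z + 1 := by linarith
    have key := ih (z + 1) hz1
    have hrec := deriv_psi0_rec hz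
    have hstep : (1 / z + 1 / (2 * z ^ 2)) - (1 / (z + 1) + 1 / (2 * (z + 1) ^ 2)) ≤ 1 / z ^ 2 := by
      have key2 : 1 / z ^ 2 - ((1 / z + 1 / (2 * z ^ 2)) - (1 / (z + 1) + 1 / (2 * (z + 1) ^ 2)))
          = 1 / (2 * z ^ 2 * (z + 1) ^ 2) := by
        field_simp
        ring
      have hpos : (0:ℝ) ≤ 1 / (2 * z ^ 2 * (z + 1) ^ 2) := by positivity
      linarith
    have hcast : z + (n + 1 : ℕ) = (z + 1) + n := by push_cast; ring
    rw [hcast]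
    linarith

lemma deriv_psi0_ge {z : ℝ} (hz : 0 < z) :
    1 / z + 1 / (2 * z ^ 2) ≤ deriv psi0 z := by
  have hzn : Filter.Tendsto (fun N : ℕ => z + (N:ℝ)) Filter.atTop Filter.atTop :=
    tendsto_atTop_add_const_left _ _ tendsto_natCast_atTop_atTop
  have a1 : Filter.Tendsto (fun N : ℕ => 1 / (z + (N:ℝ))) Filter.atTop (𝓝 0) := by
    simp only [one_div]; exact hzn.inv_tendsto_atTop
  have a2 : Filter.Tendsto (fun N : ℕ => 1 / (2 * (z + (N:ℝ)) ^ 2)) Filter.atTop (𝓝 0) := by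
    apply squeeze_zero' (g := fun N : ℕ => 1 / (z + (N:ℝ)))
    · filter_upwards [hzn.eventually (Filter.eventually_ge_atTop (1:ℝ))] with N hN
      positivity
    · filter_upwards [hzn.eventually (Filter.eventually_ge_atTop (1:ℝ))] with N hN
      apply one_div_le_one_div_of_le (by linarith)
      nlinarith
    · exact a1
  have hten := tendsto_const_nhds (x := 1 / z + 1 / (2 * z ^ 2)) (f := Filter.atTop (α := ℕ)) |>.sub (a1.add a2)
  rw [show (1 / z + 1 / (2 * z ^ 2)) = (1 / z + 1 / (2 * z ^ 2)) - (0 + 0) by ring]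
  exact le_of_tendsto hten (Filter.Eventually.of_forall fun N => deriv_psi0_ge_partial N z hz)

noncomputable def psi (z : ℝ) : ℝ := deriv (fun t => Real.log (Real.Gamma t)) z

noncomputable def h (x y : ℝ) : ℝ :=
  (1 / (x + y + 1)) * (x + x * (x + 1) / (2 * (x + y))) - psi (x + y + 1) + psi (y + 1)

lemma psi_eq : psi = psi0 := rfl

theorem stmt_19 (x y : ℝ) (hx : 1 / Real.sqrt 2 < x) (hy : 0 < y) :
    deriv (fun t => h t y) x ≤
      ((1 - 2 * x ^ 2) * y - 2 * x ^ 3 - x ^ 2) / (2 * (x + y) ^ 2 * (x + y + 1) ^ 2) ∧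
    ((1 - 2 * x ^ 2) * y - 2 * x ^ 3 - x ^ 2) / (2 * (x + y) ^ 2 * (x + y + 1) ^ 2) < 0 := by
  have hx0 : 0 < x := lt_trans (by positivity) hx
  have hxy : 0 < x + y := by linarith
  have hz : (0:ℝ) < x + y + 1 := by linarith
  have hx2 : 1 / 2 < x ^ 2 := by
    have e : (1 / Real.sqrt 2) ^ 2 = 1 / 2 := by
      rw [div_pow, one_pow, Real.sq_sqrt (by norm_num : (0:ℝ) ≤ 2)]
    calc 1/2 = (1 / Real.sqrt 2)^2 := e.symm
      _ < x ^ 2 := by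
        apply pow_lt_pow_left₀ hx (by positivity) (by norm_num)
  constructor
  · -- derivative computation
    have h1 : HasDerivAt (fun t : ℝ => t + y + 1) 1 x := by
      simpa using ((hasDerivAt_id x).add_const y).add_const 1
    have hpsi : HasDerivAt (fun t : ℝ => psi (t + y + 1)) (deriv psi0 (x + y + 1) * 1) x := by
      rw [psi_eq]
      exact (HasDerivAt.comp x (diff_psi0 hz).hasDerivAt h1)
    have hu : HasDerivAt (fun t : ℝ => 1 / (t + y + 1))
        ((0 * (x + y + 1) - 1 * 1) / (x + y + 1) ^ 2) x :=
      (hasDerivAt_const x 1).div h1 hz.ne'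
    have hn : HasDerivAt (fun t : ℝ => t * (t + 1)) (1 * (x + 1) + x * 1) x :=
      (hasDerivAt_id x).mul ((hasDerivAt_id x).add_const 1)
    have hdd : HasDerivAt (fun t : ℝ => 2 * (t + y)) (2 * 1) x :=
      ((hasDerivAt_id x).add_const y).const_mul 2
    have hq : HasDerivAt (fun t : ℝ => t * (t + 1) / (2 * (t + y)))
        (((1 * (x + 1) + x * 1) * (2 * (x + y)) - x * (x + 1) * (2 * 1)) / (2 * (x + y)) ^ 2) x :=
      hn.div hdd (by positivity)
    have hv : HasDerivAt (fun t : ℝ => t + t * (t + 1) / (2 * (t + y)))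
        (1 + ((1 * (x + 1) + x * 1) * (2 * (x + y)) - x * (x + 1) * (2 * 1)) / (2 * (x + y)) ^ 2) x :=
      (hasDerivAt_id x).add hq
    have hr := hu.mul hv
    have hH : HasDerivAt (fun t => h t y)
        (((0 * (x + y + 1) - 1 * 1) / (x + y + 1) ^ 2) * (x + x * (x + 1) / (2 * (x + y)))
          + (1 / (x + y + 1)) *
            (1 + ((1 * (x + 1) + x * 1) * (2 * (x + y)) - x * (x + 1) * (2 * 1)) / (2 * (x + y)) ^ 2)
          - deriv psi0 (x + y + 1) * 1) x := by
      have := hr.sub hpsi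
      have := this.add_const (psi (y + 1))
      simpa only [h, Pi.mul_def, Pi.sub_def] using this
    rw [hH.deriv]
    have hbound := deriv_psi0_ge hz
    have hEq : ((0 * (x + y + 1) - 1 * 1) / (x + y + 1) ^ 2) * (x + x * (x + 1) / (2 * (x + y)))
          + (1 / (x + y + 1)) *
            (1 + ((1 * (x + 1) + x * 1) * (2 * (x + y)) - x * (x + 1) * (2 * 1)) / (2 * (x + y)) ^ 2)
          - (1 / (x + y + 1) + 1 / (2 * (x + y + 1) ^ 2))
        = ((1 - 2 * x ^ 2) * y - 2 * x ^ 3 - x ^ 2) / (2 * (x + y) ^ 2 * (x + y + 1) ^ 2) := by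
      field_simp
      ring
    rw [← hEq]
    have : 1 / (x + y + 1) + 1 / (2 * (x + y + 1) ^ 2) ≤ deriv psi0 (x + y + 1) * 1 := by
      rw [mul_one]; exact hbound
    linarith
  · apply div_neg_of_neg_of_pos
    · nlinarith [pow_pos hx0 3, hx2, hy, hx0]
    · positivity
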